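/- Let (α, μ) be a probability space, p ≥ 1, and let Ω̂ : α → (p×p real matrices) be a random matrix each of whose entries is square-integrable, with entrywise expectation E[Ω̂] = Ω. Then for every real number ρ, E[‖(1−ρ)Ω̂ + ρI − Ω‖_F²] = (1−ρ)² E[‖Ω̂ − Ω‖_F²] + ρ² ‖I − Ω‖_F², where I is the p×p identity matrix. -/

import Mathlib

open MeasureTheory Matrix

/-- The scaled squared Frobenius norm `‖A‖_F² = tr(AᵀA)/p` of a `p × p` real matrix. -/
noncomputable def frobSq {p : ℕ} (A : Matrix (Fin p) (Fin p) ℝ) : ℝ :=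
  Matrix.trace (Aᵀ * A) / p

lemma frobSq_eq {p : ℕ} (A : Matrix (Fin p) (Fin p) ℝ) :
    frobSq A = (∑ i, ∑ j, (A i j)^2) / p := by
  unfold frobSq
  congr 1
  rw [Matrix.trace]
  simp [Matrix.diag, Matrix.mul_apply, sq]
  exact Finset.sum_comm

lemma entry_lemma {α : Type*} [MeasurableSpace α] (μ : Measure α) [IsProbabilityMeasure μ]
    (X : α → ℝ) (hX : MemLp X 2 μ) (hX0 : ∫ a, X a ∂μ = 0) (s c : ℝ) :
    ∫ a, (s * X a + c)^2 ∂μ = s^2 * (∫ a, (X a)^2 ∂μ) + c^2 := by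
  have hsq : Integrable (fun a => (X a)^2) μ := hX.integrable_sq
  have hX1 : Integrable X μ := hX.integrable (by norm_num)
  have h : ∀ a, (s * X a + c)^2 = s^2 * (X a)^2 + ((2*s*c) * X a + c^2) := fun a => by ring
  have hi2 : Integrable (fun a => (2*s*c) * X a + c^2) μ :=
    (hX1.const_mul _).add (integrable_const _)
  simp_rw [h]
  rw [integral_add (hsq.const_mul _) hi2,
    integral_add (hX1.const_mul _) (integrable_const _),
    integral_const_mul, integral_const_mul, integral_const, hX0]
  simp

/-- Bias-variance decomposition for the Stein-type shrinkage estimator: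
`E[‖(1−ρ)Ω̂ + ρI − Ω‖_F²] = (1−ρ)² E[‖Ω̂ − Ω‖_F²] + ρ² ‖I − Ω‖_F²`. -/
theorem shrinkage_bias_variance_decomposition
    {α : Type*} [MeasurableSpace α] (μ : Measure α) [IsProbabilityMeasure μ]
    {p : ℕ} (hp : 1 ≤ p)
    (Ωhat : α → Matrix (Fin p) (Fin p) ℝ)
    (hL2 : ∀ i j, MemLp (fun a => Ωhat a i j) 2 μ)
    (Ω : Matrix (Fin p) (Fin p) ℝ)
    (hmean : ∀ i j, (∫ a, Ωhat a i j ∂μ) = Ω i j)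
    (ρ : ℝ) :
    (∫ a, frobSq ((1 - ρ) • Ωhat a + ρ • (1 : Matrix (Fin p) (Fin p) ℝ) - Ω) ∂μ)
      = (1 - ρ) ^ 2 * (∫ a, frobSq (Ωhat a - Ω) ∂μ)
        + ρ ^ 2 * frobSq ((1 : Matrix (Fin p) (Fin p) ℝ) - Ω) := by
  have hXmem : ∀ i j, MemLp (fun a => Ωhat a i j - Ω i j) 2 μ :=
    fun i j => (hL2 i j).sub (memLp_const _)
  have hX0 : ∀ i j, ∫ a, (Ωhat a i j - Ω i j) ∂μ = 0 := by
    intro i j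
    rw [integral_sub ((hL2 i j).integrable (by norm_num)) (integrable_const _),
      integral_const, hmean]
    simp
  have hentry : ∀ a i j, ((1 - ρ) • Ωhat a + ρ • (1 : Matrix (Fin p) (Fin p) ℝ) - Ω) i j
      = (1 - ρ) * (Ωhat a i j - Ω i j) + ρ * (((1 : Matrix (Fin p) (Fin p) ℝ) - Ω) i j) := by
    intro a i j
    simp [Matrix.sub_apply, Matrix.add_apply, Matrix.smul_apply]
    ring
  have key : ∀ i j, ∫ a, (((1 - ρ) • Ωhat a + ρ • (1 : Matrix (Fin p) (Fin p) ℝ) - Ω) i j)^2 ∂μ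
      = (1 - ρ)^2 * (∫ a, ((Ωhat a - Ω) i j)^2 ∂μ)
        + (ρ * (((1 : Matrix (Fin p) (Fin p) ℝ) - Ω) i j))^2 := by
    intro i j
    simp_rw [hentry]
    exact entry_lemma μ _ (hXmem i j) (hX0 i j) (1 - ρ) _
  have hint2 : ∀ i j, Integrable (fun a => ((Ωhat a - Ω) i j)^2) μ :=
    fun i j => (hXmem i j).integrable_sq
  have hint1 : ∀ i j, Integrable
      (fun a => (((1 - ρ) • Ωhat a + ρ • (1 : Matrix (Fin p) (Fin p) ℝ) - Ω) i j)^2) μ := by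
    intro i j
    have hf : (fun a => ((1 - ρ) • Ωhat a + ρ • (1 : Matrix (Fin p) (Fin p) ℝ) - Ω) i j)
        = fun a => (1 - ρ) * (Ωhat a i j - Ω i j)
            + ρ * (((1 : Matrix (Fin p) (Fin p) ℝ) - Ω) i j) :=
      funext fun a => hentry a i j
    have hm : MemLp (fun a => ((1 - ρ) • Ωhat a + ρ • (1 : Matrix (Fin p) (Fin p) ℝ) - Ω) i j) 2 μ := by
      rw [hf]
      exact ((hXmem i j).const_mul _).add (memLp_const _)
    exact hm.integrable_sq
  simp_rw [frobSq_eq]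
  have hswap1 : ∀ i, (∫ a, ∑ j, (((1 - ρ) • Ωhat a + ρ • (1 : Matrix (Fin p) (Fin p) ℝ) - Ω) i j)^2 ∂μ)
      = ∑ j, ∫ a, (((1 - ρ) • Ωhat a + ρ • (1 : Matrix (Fin p) (Fin p) ℝ) - Ω) i j)^2 ∂μ :=
    fun i => integral_finset_sum _ (fun j _ => hint1 i j)
  have hswap2 : ∀ i, (∫ a, ∑ j, (((Ωhat a - Ω)) i j)^2 ∂μ)
      = ∑ j, ∫ a, (((Ωhat a - Ω)) i j)^2 ∂μ :=
    fun i => integral_finset_sum _ (fun j _ => hint2 i j)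
  rw [integral_div, integral_div,
    integral_finset_sum _ (fun i _ => integrable_finset_sum _ (fun j _ => hint1 i j)),
    integral_finset_sum _ (fun i _ => integrable_finset_sum _ (fun j _ => hint2 i j))]
  simp_rw [hswap1, hswap2, key]
  rw [← mul_div_assoc, ← mul_div_assoc, ← add_div]
  congr 1
  simp only [Finset.sum_add_distrib, Finset.mul_sum, mul_pow]
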